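/- arXiv:1702.08731 — 5 statements merged into one kernel-verified Lean document; each statement's English description precedes it below -/
import Mathlib

section
/- The map sending a pair of unit quaternions (l, r) to the linear map q ↦ l * q * r⁻¹ on the quaternions ℍ ≅ ℝ⁴ is a group homomorphism from the product of the group of unit quaternions with itself into the group of linear isometries of ℍ, and its kernel is exactly {(1,1), (-1,-1)}. -/
open Quaternion

noncomputable def conjMap (p : Metric.sphere (0 : ℍ[ℝ]) 1 × Metric.sphere (0 : ℍ[ℝ]) 1) :
    ℍ[ℝ] ≃ₗᵢ[ℝ] ℍ[ℝ] where
  toFun q := (p.1 : ℍ[ℝ]) * q * (p.2 : ℍ[ℝ])⁻¹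
  invFun q := (p.1 : ℍ[ℝ])⁻¹ * q * (p.2 : ℍ[ℝ])
  map_add' x y := by
    show (p.1 : ℍ[ℝ]) * (x + y) * (p.2 : ℍ[ℝ])⁻¹ = _
    rw [mul_add, add_mul]
  map_smul' c x := by simp [Algebra.mul_smul_comm, Algebra.smul_mul_assoc]
  left_inv q := by
    have h1 : (p.1 : ℍ[ℝ]) ≠ 0 := by
      have := mem_sphere_zero_iff_norm.mp p.1.2; intro h; simp [h] at this
    have h2 : (p.2 : ℍ[ℝ]) ≠ 0 := by
      have := mem_sphere_zero_iff_norm.mp p.2.2; intro h; simp [h] at this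
    show (p.1 : ℍ[ℝ])⁻¹ * ((p.1 : ℍ[ℝ]) * q * (p.2 : ℍ[ℝ])⁻¹) * (p.2 : ℍ[ℝ]) = q
    rw [mul_assoc ((p.1 : ℍ[ℝ])) q, ← mul_assoc, ← mul_assoc, inv_mul_cancel₀ h1, one_mul,
      mul_assoc, inv_mul_cancel₀ h2, mul_one]
  right_inv q := by
    have h1 : (p.1 : ℍ[ℝ]) ≠ 0 := by
      have := mem_sphere_zero_iff_norm.mp p.1.2; intro h; simp [h] at this
    have h2 : (p.2 : ℍ[ℝ]) ≠ 0 := by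
      have := mem_sphere_zero_iff_norm.mp p.2.2; intro h; simp [h] at this
    show (p.1 : ℍ[ℝ]) * ((p.1 : ℍ[ℝ])⁻¹ * q * (p.2 : ℍ[ℝ])) * (p.2 : ℍ[ℝ])⁻¹ = q
    rw [mul_assoc ((p.1 : ℍ[ℝ])⁻¹) q, ← mul_assoc, ← mul_assoc, mul_inv_cancel₀ h1, one_mul,
      mul_assoc, mul_inv_cancel₀ h2, mul_one]
  norm_map' q := by
    have h1 : ‖(p.1 : ℍ[ℝ])‖ = 1 := mem_sphere_zero_iff_norm.mp p.1.2
    have h2 : ‖(p.2 : ℍ[ℝ])‖ = 1 := mem_sphere_zero_iff_norm.mp p.2.2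
    show ‖(p.1 : ℍ[ℝ]) * q * (p.2 : ℍ[ℝ])⁻¹‖ = ‖q‖
    rw [norm_mul, norm_mul, norm_inv, h1, h2]
    simp

theorem conjMap_apply (p : Metric.sphere (0 : ℍ[ℝ]) 1 × Metric.sphere (0 : ℍ[ℝ]) 1)
    (q : ℍ[ℝ]) : conjMap p q = (p.1 : ℍ[ℝ]) * q * (p.2 : ℍ[ℝ])⁻¹ := rfl

theorem central_of_commutes (l : ℍ[ℝ]) (hl : ‖l‖ = 1) (h : ∀ q : ℍ[ℝ], l * q = q * l) :
    l = 1 ∨ l = -1 := by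
  have hi := h ⟨0, 1, 0, 0⟩
  have hj := h ⟨0, 0, 1, 0⟩
  rw [Quaternion.ext_iff] at hi hj
  erw [Quaternion.re_mul, Quaternion.imI_mul, Quaternion.imJ_mul, Quaternion.imK_mul, Quaternion.re_mul,
    Quaternion.imI_mul, Quaternion.imJ_mul, Quaternion.imK_mul] at hi hj
  obtain ⟨_, hi2, hi3, hi4⟩ := hi
  obtain ⟨_, hj2, hj3, hj4⟩ := hj
  have h2 : l.imI = 0 := by dsimp at *; linarith
  have h3 : l.imJ = 0 := by dsimp at *; linarith
  have h4 : l.imK = 0 := by dsimp at *; linarith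
  have hns : normSq l = 1 := by
    rw [normSq_eq_norm_mul_self, hl]; norm_num
  rw [normSq_def'] at hns
  have : l.re ^ 2 = 1 := by rw [h2, h3, h4] at hns; linarith
  have hre : l.re = 1 ∨ l.re = -1 := by
    rcases mul_eq_zero.mp (show (l.re - 1) * (l.re + 1) = 0 by ring_nf; linarith) with hh | hh
    · left; linarith
    · right; linarith
  rcases hre with hh | hh
  · left; ext <;> simp [hh, h2, h3, h4]
  · right; ext <;> simp [hh, h2, h3, h4]

/-- The map sending a pair of unit quaternions `(l, r)` to `q ↦ l * q * r⁻¹` is a group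
homomorphism from the product of the unit-quaternion group with itself into the group of
linear isometric equivalences of `ℍ`, with kernel exactly `{(1,1), (-1,-1)}`. -/
theorem stmt_0 :
    ∃ φ : (Metric.sphere (0 : ℍ[ℝ]) 1 × Metric.sphere (0 : ℍ[ℝ]) 1) →*
        (ℍ[ℝ] ≃ₗᵢ[ℝ] ℍ[ℝ]),
      (∀ p : Metric.sphere (0 : ℍ[ℝ]) 1 × Metric.sphere (0 : ℍ[ℝ]) 1, ∀ q : ℍ[ℝ],
        φ p q = (p.1 : ℍ[ℝ]) * q * (p.2 : ℍ[ℝ])⁻¹) ∧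
      (∀ p : Metric.sphere (0 : ℍ[ℝ]) 1 × Metric.sphere (0 : ℍ[ℝ]) 1,
        p ∈ φ.ker ↔ ((p.1 : ℍ[ℝ]) = 1 ∧ (p.2 : ℍ[ℝ]) = 1) ∨
          ((p.1 : ℍ[ℝ]) = -1 ∧ (p.2 : ℍ[ℝ]) = -1)) := by
  refine ⟨{ toFun := conjMap
            map_one' := ?_
            map_mul' := ?_ }, fun p q => rfl, ?_⟩
  · refine LinearIsometryEquiv.ext fun q => ?_
    rw [conjMap_apply]
    simp
  · intro p₁ p₂
    refine LinearIsometryEquiv.ext fun q => ?_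
    rw [LinearIsometryEquiv.coe_mul]
    show conjMap (p₁ * p₂) q = conjMap p₁ (conjMap p₂ q)
    rw [conjMap_apply, conjMap_apply, conjMap_apply]
    simp only [Prod.fst_mul, Prod.snd_mul, Metric.unitSphere.coe_mul, mul_inv_rev]
    simp [mul_assoc]
  · intro p
    have hl : ‖(p.1 : ℍ[ℝ])‖ = 1 := mem_sphere_zero_iff_norm.mp p.1.2
    constructor
    · intro hp
      have h : ∀ q : ℍ[ℝ], (p.1 : ℍ[ℝ]) * q * (p.2 : ℍ[ℝ])⁻¹ = q := by
        intro q
        have := MonoidHom.mem_ker.mp hp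
        calc (p.1 : ℍ[ℝ]) * q * (p.2 : ℍ[ℝ])⁻¹ = conjMap p q := rfl
        _ = q := by rw [show conjMap p = 1 from this]; rfl
      have h2 : (p.2 : ℍ[ℝ]) ≠ 0 := by
        have := mem_sphere_zero_iff_norm.mp p.2.2; intro hh; simp [hh] at this
      have hlr : (p.1 : ℍ[ℝ]) = (p.2 : ℍ[ℝ]) := by
        have := h 1
        rw [mul_one] at this
        rw [mul_inv_eq_one₀ h2] at this
        exact this
      have hc : ∀ q : ℍ[ℝ], (p.1 : ℍ[ℝ]) * q = q * (p.1 : ℍ[ℝ]) := by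
        intro q
        have := h q
        rw [hlr] at this ⊢
        calc (p.2 : ℍ[ℝ]) * q = (p.2 : ℍ[ℝ]) * q * (p.2 : ℍ[ℝ])⁻¹ * (p.2 : ℍ[ℝ]) := by
              rw [mul_assoc, inv_mul_cancel₀ h2, mul_one]
        _ = q * (p.2 : ℍ[ℝ]) := by rw [this]
      rcases central_of_commutes _ hl hc with h1 | h1
      · exact Or.inl ⟨h1, by rw [← hlr, h1]⟩
      · exact Or.inr ⟨h1, by rw [← hlr, h1]⟩
    · rintro (⟨ha, hb⟩ | ⟨ha, hb⟩) <;>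
      · refine MonoidHom.mem_ker.mpr (LinearIsometryEquiv.ext fun q => ?_)
        show conjMap p q = (1 : ℍ[ℝ] ≃ₗᵢ[ℝ] ℍ[ℝ]) q
        rw [conjMap_apply, ha, hb, LinearIsometryEquiv.coe_one, id_eq]
        simp [inv_neg]
end

section
/- Let l and r be unit quaternions. There exists a nonzero quaternion q with l * q = q * r if and only if the real parts of l and r are equal. -/
open Quaternion

private lemma re_mul_comm (a b : ℍ[ℝ]) : (a * b).re = (b * a).re := by
  simp only [Quaternion.re_mul]; ring

/-- For unit quaternions `l` and `r`, there exists a nonzero quaternion `q` with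
`l * q = q * r` if and only if the real parts of `l` and `r` agree. -/
theorem stmt_3 (l r : ℍ[ℝ]) (hl : ‖l‖ = 1) (hr : ‖r‖ = 1) :
    (∃ q : ℍ[ℝ], q ≠ 0 ∧ l * q = q * r) ↔ l.re = r.re := by
  constructor
  · rintro ⟨q, hq0, hq⟩
    have h1 : (q⁻¹ * (l * q)).re = (q⁻¹ * (q * r)).re := by rw [hq]
    have h2 : (q⁻¹ * (q * r)).re = r.re := by
      rw [← mul_assoc, inv_mul_cancel₀ hq0, one_mul]
    have h3 : (q⁻¹ * (l * q)).re = l.re := by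
      rw [← mul_assoc, re_mul_comm, ← mul_assoc, mul_inv_cancel₀ hq0, one_mul]
    rw [← h3, h1, h2]
  · intro hre
    have hnl : l.re ^ 2 + l.imI ^ 2 + l.imJ ^ 2 + l.imK ^ 2 = 1 := by
      have := Quaternion.normSq_eq_norm_mul_self l
      rw [hl, Quaternion.normSq_def'] at this
      linarith
    have hnr : r.re ^ 2 + r.imI ^ 2 + r.imJ ^ 2 + r.imK ^ 2 = 1 := by
      have := Quaternion.normSq_eq_norm_mul_self r
      rw [hr, Quaternion.normSq_def'] at this
      linarith
    by_cases h : l.imI = -r.imI ∧ l.imJ = -r.imJ ∧ l.imK = -r.imK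
    · obtain ⟨hi, hj, hk⟩ := h
      by_cases h2 : l.imJ = 0 ∧ l.imK = 0
      · -- q = ⟨0, 0, 1, 0⟩, orthogonal to im l = (x, 0, 0)
        have hj2 : r.imJ = 0 := by linarith [hj, h2.1]
        have hk2 : r.imK = 0 := by linarith [h2.2, hk]
        refine ⟨(id ⟨0, 0, 1, 0⟩ : ℍ[ℝ]), ?_, ?_⟩
        · intro hz
          have := congrArg QuaternionAlgebra.imJ hz
          simp [id] at this
        · ext <;> simp only [Quaternion.re_mul, Quaternion.imI_mul, Quaternion.imJ_mul,
            Quaternion.imK_mul, hre, hi, hj2, hk2, h2.1, h2.2] <;> simp only [id] <;> ring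
      · -- q = ⟨0, 0, -l.imK, l.imJ⟩
        refine ⟨(id ⟨0, 0, -l.imK, l.imJ⟩ : ℍ[ℝ]), ?_, ?_⟩
        · intro hz
          have hJ := congrArg QuaternionAlgebra.imK hz
          have hK := congrArg QuaternionAlgebra.imJ hz
          simp [id] at hJ hK
          exact h2 ⟨hJ, hK⟩
        · ext <;> simp only [Quaternion.re_mul, Quaternion.imI_mul, Quaternion.imJ_mul,
            Quaternion.imK_mul, hre, hi, hj, hk] <;> simp only [id] <;> ring
    · -- q = im l + im r ≠ 0
      refine ⟨(id ⟨0, l.imI + r.imI, l.imJ + r.imJ, l.imK + r.imK⟩ : ℍ[ℝ]), ?_, ?_⟩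
      · intro hz
        replace hz := Quaternion.ext_iff.mp hz
        simp [id] at hz
        exact h ⟨by linarith [hz.1], by linarith [hz.2.1], by linarith [hz.2.2]⟩
      · have key : l.imI ^ 2 + l.imJ ^ 2 + l.imK ^ 2
            = r.imI ^ 2 + r.imJ ^ 2 + r.imK ^ 2 := by
          rw [hre] at hnl; nlinarith [hnl, hnr]
        ext <;> simp only [Quaternion.re_mul, Quaternion.imI_mul, Quaternion.imJ_mul,
          Quaternion.imK_mul, hre] <;> simp only [id] <;>
          first
          | linear_combination -key
          | ring
end

section
/- Let l and r be unit quaternions with equal real parts and with l ≠ 1 and l ≠ -1. Then the set {q ∈ ℍ : l * q = q * r} is an ℝ-linear subspace of ℍ of dimension exactly 2. -/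
open Quaternion

def qmk (a b c d : ℝ) : ℍ[ℝ] := ⟨a, b, c, d⟩

lemma quat_mk_re (a b c d : ℝ) : (qmk a b c d).re = a := rfl
lemma quat_mk_imI (a b c d : ℝ) : (qmk a b c d).imI = b := rfl
lemma quat_mk_imJ (a b c d : ℝ) : (qmk a b c d).imJ = c := rfl
lemma quat_mk_imK (a b c d : ℝ) : (qmk a b c d).imK = d := rfl

/-- A quaternion commuting with `r` (with nonzero imaginary part) lies in `span {1, r}`. -/
lemma quat_comm_mem_span (r p : ℍ[ℝ]) (him : r.imI ^ 2 + r.imJ ^ 2 + r.imK ^ 2 ≠ 0)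
    (h : r * p = p * r) : p ∈ Submodule.span ℝ ({1, r} : Set ℍ[ℝ]) := by
  have e1 : r.imJ * p.imK = r.imK * p.imJ := by
    have h' := congrArg QuaternionAlgebra.imI h
    rw [Quaternion.imI_mul, Quaternion.imI_mul] at h'
    linarith
  have e2 : r.imK * p.imI = r.imI * p.imK := by
    have h' := congrArg QuaternionAlgebra.imJ h
    rw [Quaternion.imJ_mul, Quaternion.imJ_mul] at h'
    linarith
  have e3 : r.imI * p.imJ = r.imJ * p.imI := by
    have h' := congrArg QuaternionAlgebra.imK h
    rw [Quaternion.imK_mul, Quaternion.imK_mul] at h'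
    linarith
  rw [Submodule.mem_span_pair]
  set S := r.imI ^ 2 + r.imJ ^ 2 + r.imK ^ 2 with hS
  set s := (r.imI * p.imI + r.imJ * p.imJ + r.imK * p.imK) / S with hs
  have key1 : (r.imI * p.imI + r.imJ * p.imJ + r.imK * p.imK) * r.imI = p.imI * S := by
    rw [hS]; linear_combination r.imJ * e3 - r.imK * e2
  have key2 : (r.imI * p.imI + r.imJ * p.imJ + r.imK * p.imK) * r.imJ = p.imJ * S := by
    rw [hS]; linear_combination (- r.imI) * e3 + r.imK * e1
  have key3 : (r.imI * p.imI + r.imJ * p.imJ + r.imK * p.imK) * r.imK = p.imK * S := by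
    rw [hS]; linear_combination r.imI * e2 - r.imJ * e1
  refine ⟨p.re - s * r.re, s, ?_⟩
  apply Quaternion.ext
  · simp only [Quaternion.re_add, Quaternion.re_smul, Quaternion.re_one, smul_eq_mul]
    ring
  · simp only [Quaternion.imI_add, Quaternion.imI_smul, Quaternion.imI_one, smul_eq_mul]
    rw [hs, mul_zero, zero_add, div_mul_eq_mul_div, key1, mul_div_assoc, div_self him, mul_one]
  · simp only [Quaternion.imJ_add, Quaternion.imJ_smul, Quaternion.imJ_one, smul_eq_mul]
    rw [hs, mul_zero, zero_add, div_mul_eq_mul_div, key2, mul_div_assoc, div_self him, mul_one]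
  · simp only [Quaternion.imK_add, Quaternion.imK_smul, Quaternion.imK_one, smul_eq_mul]
    rw [hs, mul_zero, zero_add, div_mul_eq_mul_div, key3, mul_div_assoc, div_self him, mul_one]

lemma quat_span_comm (r p : ℍ[ℝ]) (hp : p ∈ Submodule.span ℝ ({1, r} : Set ℍ[ℝ])) :
    r * p = p * r := by
  rw [Submodule.mem_span_pair] at hp
  obtain ⟨a, b, rfl⟩ := hp
  simp only [mul_add, add_mul, mul_smul_comm, smul_mul_assoc, mul_one, one_mul]

/-- If `l` and `r` are unit quaternions with equal real parts, `l ≠ 1` and `l ≠ -1`,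
then `{q : ℍ | l * q = q * r}` is a 2-dimensional `ℝ`-linear subspace of `ℍ ≅ ℝ⁴`. -/
theorem stmt_4 (l r : ℍ[ℝ]) (hl : ‖l‖ = 1) (hr : ‖r‖ = 1)
    (hre : l.re = r.re) (h1 : l ≠ 1) (h2 : l ≠ -1) :
    ∃ N : Submodule ℝ ℍ[ℝ], (N : Set ℍ[ℝ]) = {q : ℍ[ℝ] | l * q = q * r} ∧
      Module.finrank ℝ N = 2 := by
  have hnl : Quaternion.normSq l = 1 := by
    rw [Quaternion.normSq_eq_norm_mul_self, hl, one_mul]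
  have hnr : Quaternion.normSq r = 1 := by
    rw [Quaternion.normSq_eq_norm_mul_self, hr, one_mul]
  rw [Quaternion.normSq_def'] at hnl hnr
  -- the imaginary part of l is nonzero
  have hpos : 0 < l.imI ^ 2 + l.imJ ^ 2 + l.imK ^ 2 := by
    by_contra hc
    push_neg at hc
    have hb : l.imI = 0 := by nlinarith [sq_nonneg l.imI, sq_nonneg l.imJ, sq_nonneg l.imK]
    have hcc : l.imJ = 0 := by nlinarith [sq_nonneg l.imI, sq_nonneg l.imJ, sq_nonneg l.imK]
    have hd : l.imK = 0 := by nlinarith [sq_nonneg l.imI, sq_nonneg l.imJ, sq_nonneg l.imK]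
    have : (l.re - 1) * (l.re + 1) = 0 := by nlinarith
    rcases mul_eq_zero.mp this with h | h
    · exact h1 (by apply Quaternion.ext <;> simp [hb, hcc, hd] <;> linarith)
    · exact h2 (by apply Quaternion.ext <;> simp [hb, hcc, hd] <;> linarith)
  have hresq : l.re ^ 2 = r.re ^ 2 := by rw [hre]
  have himr : r.imI ^ 2 + r.imJ ^ 2 + r.imK ^ 2 = l.imI ^ 2 + l.imJ ^ 2 + l.imK ^ 2 := by
    linarith
  have himr0 : r.imI ^ 2 + r.imJ ^ 2 + r.imK ^ 2 ≠ 0 := by rw [himr]; exact hpos.ne'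
  -- find a nonzero u with l * u = u * r
  obtain ⟨u, hu0, hu⟩ : ∃ u : ℍ[ℝ], u ≠ 0 ∧ l * u = u * r := by
    by_cases hvw : l.imI + r.imI = 0 ∧ l.imJ + r.imJ = 0 ∧ l.imK + r.imK = 0
    · obtain ⟨w1, w2, w3⟩ := hvw
      have hb' : r.imI = -l.imI := by linarith
      have hc' : r.imJ = -l.imJ := by linarith
      have hd' : r.imK = -l.imK := by linarith
      by_cases hbc : l.imI = 0 ∧ l.imJ = 0
      · obtain ⟨hb, hc⟩ := hbc
        refine ⟨qmk 0 1 0 0, ?_, ?_⟩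
        · intro hz
          have := congrArg QuaternionAlgebra.imI hz
          rw [quat_mk_imI] at this
          simp at this
        · apply Quaternion.ext <;>
            simp only [Quaternion.re_mul, Quaternion.imI_mul, Quaternion.imJ_mul,
              Quaternion.imK_mul, quat_mk_re, quat_mk_imI, quat_mk_imJ, quat_mk_imK,
              hb', hc', hd', ← hre, hb, hc] <;> ring
      · refine ⟨qmk 0 (-l.imJ) l.imI 0, ?_, ?_⟩
        · intro hz
          rw [not_and_or] at hbc
          rcases hbc with hb | hc
          · apply hb
            have := congrArg QuaternionAlgebra.imJ hz
            rw [quat_mk_imJ] at this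
            simpa using this
          · apply hc
            have := congrArg QuaternionAlgebra.imI hz
            rw [quat_mk_imI] at this
            simpa using this
        · apply Quaternion.ext <;>
            simp only [Quaternion.re_mul, Quaternion.imI_mul, Quaternion.imJ_mul,
              Quaternion.imK_mul, quat_mk_re, quat_mk_imI, quat_mk_imJ, quat_mk_imK,
              hb', hc', hd', ← hre] <;> ring
    · refine ⟨qmk 0 (l.imI + r.imI) (l.imJ + r.imJ) (l.imK + r.imK), ?_, ?_⟩
      · intro hz
        rw [not_and_or, not_and_or] at hvw
        apply hvw.elim (fun hb => hb ?_) (fun h' => h'.elim (fun hc => hc ?_) (fun hd => hd ?_))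
        · have := congrArg QuaternionAlgebra.imI hz; rw [quat_mk_imI] at this; simpa using this
        · have := congrArg QuaternionAlgebra.imJ hz; rw [quat_mk_imJ] at this; simpa using this
        · have := congrArg QuaternionAlgebra.imK hz; rw [quat_mk_imK] at this; simpa using this
      · apply Quaternion.ext
        · simp only [Quaternion.re_mul, quat_mk_re, quat_mk_imI, quat_mk_imJ, quat_mk_imK]
          linear_combination himr
        · simp only [Quaternion.imI_mul, quat_mk_re, quat_mk_imI, quat_mk_imJ, quat_mk_imK]
          linear_combination (l.imI + r.imI) * hre
        · simp only [Quaternion.imJ_mul, quat_mk_re, quat_mk_imI, quat_mk_imJ, quat_mk_imK]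
          linear_combination (l.imJ + r.imJ) * hre
        · simp only [Quaternion.imK_mul, quat_mk_re, quat_mk_imI, quat_mk_imJ, quat_mk_imK]
          linear_combination (l.imK + r.imK) * hre
  -- build the submodule
  have huinj : Function.Injective (LinearMap.mulLeft ℝ u) := by
    intro a b hab
    simp only [LinearMap.mulLeft_apply] at hab
    exact mul_left_cancel₀ hu0 hab
  set M : Submodule ℝ ℍ[ℝ] := Submodule.span ℝ ({1, r} : Set ℍ[ℝ]) with hM
  refine ⟨M.map (LinearMap.mulLeft ℝ u), ?_, ?_⟩
  · ext q
    simp only [SetLike.mem_coe, Submodule.mem_map, LinearMap.mulLeft_apply, Set.mem_setOf_eq]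
    constructor
    · rintro ⟨p, hp, rfl⟩
      have hc : r * p = p * r := quat_span_comm r p hp
      calc l * (u * p) = (l * u) * p := by rw [mul_assoc]
        _ = u * (r * p) := by rw [hu, mul_assoc]
        _ = u * (p * r) := by rw [hc]
        _ = (u * p) * r := by rw [mul_assoc]
    · intro hq
      refine ⟨u⁻¹ * q, ?_, ?_⟩
      · apply quat_comm_mem_span r _ himr0
        apply mul_left_cancel₀ hu0
        calc u * (r * (u⁻¹ * q)) = (u * r) * (u⁻¹ * q) := by rw [mul_assoc]
          _ = (l * u) * (u⁻¹ * q) := by rw [hu]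
          _ = l * (u * u⁻¹ * q) := by rw [mul_assoc, mul_assoc]
          _ = l * q := by rw [mul_inv_cancel₀ hu0, one_mul]
          _ = q * r := hq
          _ = (u * (u⁻¹ * q)) * r := by
              rw [← mul_assoc, mul_inv_cancel₀ hu0, one_mul]
          _ = u * ((u⁻¹ * q) * r) := by rw [mul_assoc]
      · rw [← mul_assoc, mul_inv_cancel₀ hu0, one_mul]
  · rw [← LinearEquiv.finrank_eq (Submodule.equivMapOfInjective _ huinj M)]
    have hli : LinearIndependent ℝ ![(1 : ℍ[ℝ]), r] := by
      rw [linearIndependent_fin2]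
      constructor
      · simp only [Matrix.cons_val_one, Matrix.head_cons, Matrix.cons_val_fin_one]
        intro hz
        apply himr0
        rw [hz]
        simp
      · intro a
        simp only [Matrix.cons_val_one, Matrix.head_cons, Matrix.cons_val_zero]
        intro hz
        apply himr0
        have hb := congrArg QuaternionAlgebra.imI hz
        have hc := congrArg QuaternionAlgebra.imJ hz
        have hd := congrArg QuaternionAlgebra.imK hz
        have ha := congrArg QuaternionAlgebra.re hz
        simp only [Quaternion.re_smul, Quaternion.imI_smul, Quaternion.imJ_smul,
          Quaternion.imK_smul, Quaternion.re_one, Quaternion.imI_one, Quaternion.imJ_one,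
          Quaternion.imK_one, smul_eq_mul] at ha hb hc hd
        have ha0 : a ≠ 0 := by
          intro h0
          rw [h0, zero_mul] at ha
          exact zero_ne_one ha
        have hb0 : r.imI = 0 := by rcases mul_eq_zero.mp hb with h | h; exact absurd h ha0; exact h
        have hc0 : r.imJ = 0 := by rcases mul_eq_zero.mp hc with h | h; exact absurd h ha0; exact h
        have hd0 : r.imK = 0 := by rcases mul_eq_zero.mp hd with h | h; exact absurd h ha0; exact h
        rw [hb0, hc0, hd0]
        ring
    have hrange : ({1, r} : Set ℍ[ℝ]) = Set.range ![(1 : ℍ[ℝ]), r] := by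
      simp [Matrix.range_cons, Matrix.range_empty, Set.pair_comm]
    rw [hM, hrange, finrank_span_eq_card hli]
    rfl
end

section
/- Let a be a unit quaternion. The map T : ℍ → ℝ⁴ → ℍ given by T(q) = a * conj(q) * a is an ℝ-linear involution that fixes every element of the real span of a and equals -identity on the orthogonal complement of a. -/
open Quaternion

/-- For a unit quaternion `a`, the map `T q = a * conj q * a` is an `ℝ`-linear involution
fixing every element of the real span of `a` and acting as `-id` on the orthogonal
complement of `a`: the axial reflection in the `a`-axis. -/
theorem stmt_6 (a : ℍ[ℝ]) (ha : ‖a‖ = 1) :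
    IsLinearMap ℝ (fun q : ℍ[ℝ] => a * star q * a) ∧
      (∀ q : ℍ[ℝ], a * star (a * star q * a) * a = q) ∧
      (∀ c : ℝ, a * star (c • a) * a = c • a) ∧
      (∀ q : ℍ[ℝ], (inner ℝ a q : ℝ) = 0 → a * star q * a = -q) := by
  have hns : (normSq a : ℝ) = 1 := by
    have := Quaternion.normSq_eq_norm_mul_self (a := a)
    rw [ha] at this; simpa using this
  have h1 : a * star a = 1 := by rw [Quaternion.self_mul_star, hns]; simp
  have h2 : star a * a = 1 := by rw [Quaternion.star_mul_self, hns]; simp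
  refine ⟨⟨fun x y => by simp [mul_add, add_mul], fun c x => by
      simp [smul_mul_assoc, mul_smul_comm]⟩, ?_, ?_, ?_⟩
  · intro q
    simp only [star_mul, star_star]
    calc a * (star a * (q * star a)) * a = (a * star a) * q * (star a * a) := by
          simp only [mul_assoc]
    _ = q := by rw [h1, h2]; simp
  · intro c
    simp only [Quaternion.star_smul, mul_smul_comm, smul_mul_assoc]
    rw [show a * star a * a = a by rw [h1, one_mul]]
  · intro q hq
    rw [Quaternion.inner_def] at hq
    have hre : (a * star q) + star (a * star q) = 0 := by
      rw [Quaternion.self_add_star', hq]; simp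
    have haq : a * star q = -(q * star a) := by
      rw [star_mul, star_star] at hre
      exact eq_neg_of_add_eq_zero_left hre
    calc a * star q * a = -(q * star a) * a := by rw [haq]
    _ = -q := by rw [neg_mul, mul_assoc, h2, mul_one]
end

section
/- Let α ∈ ℝ, β₁ ∈ ℝ, β₂ > 0 with β₁ + β₂ > 0. Define s(θ) = (sin 4θ)^{(β₁+β₂)/(2β₂)} · (1 + cos 4θ)^{-β₁/(2β₂)} for θ ∈ (0, π/4), and S(θ) = ∫₀^θ s(u)/sin 4u du. If (r(t), θ(t)) solves r' = αr + r³(β₁ + β₂ cos 4θ), θ' = -β₂ r² sin 4θ with θ(t) ∈ (0, π/4) and r(t) > 0 on an interval, then the quantity r(t)² s(θ(t)) + (2α/β₂) S(θ(t)) is constant on that interval. -/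
open Real Set

private lemma s_hasDerivAt (β₁ β₂ : ℝ) (s : ℝ → ℝ)
    (hs : ∀ θ ∈ Ioo 0 (π / 4),
      s θ = (Real.sin (4 * θ)) ^ ((β₁ + β₂) / (2 * β₂))
        * (1 + Real.cos (4 * θ)) ^ (-(β₁ / (2 * β₂)))) (x : ℝ) (hx : x ∈ Ioo 0 (π / 4)) :
    HasDerivAt s
      (4 * (((β₁ + β₂) / (2 * β₂)) * Real.cos (4 * x)
          * (Real.sin (4 * x) ^ ((β₁ + β₂) / (2 * β₂)) / Real.sin (4 * x))
          * (1 + Real.cos (4 * x)) ^ (-(β₁ / (2 * β₂)))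
        + (β₁ / (2 * β₂)) * (Real.sin (4 * x) ^ ((β₁ + β₂) / (2 * β₂)) * Real.sin (4 * x))
          * ((1 + Real.cos (4 * x)) ^ (-(β₁ / (2 * β₂))) / (1 + Real.cos (4 * x))))) x := by
  have hsin : 0 < Real.sin (4 * x) := by
    apply Real.sin_pos_of_pos_of_lt_pi (by linarith [hx.1])
    have := hx.2; nlinarith [Real.pi_pos]
  have hcos2 : 0 < Real.cos (2 * x) := by
    apply Real.cos_pos_of_mem_Ioo
    constructor
    · nlinarith [Real.pi_pos, hx.1]
    · nlinarith [hx.2]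
  have hcos : 0 < 1 + Real.cos (4 * x) := by
    have h4 : Real.cos (4 * x) = 2 * Real.cos (2 * x) ^ 2 - 1 := by
      rw [show (4 : ℝ) * x = 2 * (2 * x) by ring, Real.cos_two_mul]
    rw [h4]; nlinarith
  have h4x : HasDerivAt (fun y : ℝ => 4 * y) 4 x := by
    simpa using (hasDerivAt_id x).const_mul 4
  have hsin' : HasDerivAt (fun y : ℝ => Real.sin (4 * y)) (Real.cos (4 * x) * 4) x :=
    (Real.hasDerivAt_sin (4 * x)).comp x h4x
  have hcos' : HasDerivAt (fun y : ℝ => 1 + Real.cos (4 * y)) (-Real.sin (4 * x) * 4) x :=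
    ((Real.hasDerivAt_cos (4 * x)).comp x h4x).const_add 1
  have h1 := hsin'.rpow_const (p := (β₁ + β₂) / (2 * β₂)) (Or.inl hsin.ne')
  have h2 := hcos'.rpow_const (p := -(β₁ / (2 * β₂))) (Or.inl hcos.ne')
  have hf := h1.mul h2
  have hev : s =ᶠ[nhds x] (fun y =>
      (Real.sin (4 * y)) ^ ((β₁ + β₂) / (2 * β₂))
        * (1 + Real.cos (4 * y)) ^ (-(β₁ / (2 * β₂)))) :=
    Filter.eventuallyEq_of_mem (Ioo_mem_nhds hx.1 hx.2) hs
  have hfinal := hf.congr_of_eventuallyEq hev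
  refine hfinal.congr_deriv ?_
  rw [Real.rpow_sub_one hsin.ne', Real.rpow_sub_one hcos.ne']
  ring

/-- Conserved quantity for the polar form of the `D₄`-equivariant system
`ż = αz + β₁z²z̄ + β₂z̄³`: along trajectories `(r, θ)` with `θ ∈ (0, π/4)` and `r > 0`,
the quantity `r² s(θ) + (2α/β₂) S(θ)` is constant, where
`s(θ) = (sin 4θ)^((β₁+β₂)/(2β₂)) (1 + cos 4θ)^(-β₁/(2β₂))` and `S' = s(θ)/sin 4θ`. -/
theorem stmt_14 (α β₁ β₂ : ℝ) (hβ₂ : 0 < β₂) (hsum : 0 < β₁ + β₂)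
    (s S : ℝ → ℝ)
    (hs : ∀ θ ∈ Ioo 0 (π / 4),
      s θ = (Real.sin (4 * θ)) ^ ((β₁ + β₂) / (2 * β₂))
        * (1 + Real.cos (4 * θ)) ^ (-(β₁ / (2 * β₂))))
    (hS : ∀ θ ∈ Ioo 0 (π / 4), HasDerivAt S (s θ / Real.sin (4 * θ)) θ)
    (r θ : ℝ → ℝ) (t₀ t₁ : ℝ)
    (hr : ∀ t ∈ Ioo t₀ t₁, HasDerivAt r
      (α * r t + (r t) ^ 3 * (β₁ + β₂ * Real.cos (4 * θ t))) t)
    (hθ : ∀ t ∈ Ioo t₀ t₁, HasDerivAt θ (-β₂ * (r t) ^ 2 * Real.sin (4 * θ t)) t)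
    (hθmem : ∀ t ∈ Ioo t₀ t₁, θ t ∈ Ioo 0 (π / 4))
    (hrpos : ∀ t ∈ Ioo t₀ t₁, 0 < r t) :
    ∀ a ∈ Ioo t₀ t₁, ∀ b ∈ Ioo t₀ t₁,
      (r a) ^ 2 * s (θ a) + (2 * α / β₂) * S (θ a)
        = (r b) ^ 2 * s (θ b) + (2 * α / β₂) * S (θ b) := by
  have hkey : ∀ t ∈ Ioo t₀ t₁,
      HasDerivAt (fun t => (r t) ^ 2 * s (θ t) + (2 * α / β₂) * S (θ t)) 0 t := by
    intro t ht
    have hθt := hθmem t ht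
    have hsin : 0 < Real.sin (4 * θ t) := by
      apply Real.sin_pos_of_pos_of_lt_pi (by linarith [hθt.1])
      have := hθt.2; nlinarith [Real.pi_pos]
    have hcos : 0 < 1 + Real.cos (4 * θ t) := by
      have hcos2 : 0 < Real.cos (2 * θ t) := by
        apply Real.cos_pos_of_mem_Ioo
        constructor
        · nlinarith [Real.pi_pos, hθt.1]
        · nlinarith [hθt.2]
      have h4 : Real.cos (4 * θ t) = 2 * Real.cos (2 * θ t) ^ 2 - 1 := by
        rw [show (4 : ℝ) * θ t = 2 * (2 * θ t) by ring, Real.cos_two_mul]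
      rw [h4]; nlinarith
    have hsθ := (s_hasDerivAt β₁ β₂ s hs (θ t) hθt).comp t (hθ t ht)
    have hSθ := (hS (θ t) hθt).comp t (hθ t ht)
    have hr2 := (hr t ht).pow 2
    have hE := (hr2.mul hsθ).add (hSθ.const_mul (2 * α / β₂))
    refine hE.congr_deriv ?_
    simp only [Function.comp_apply, Pi.pow_apply]
    rw [hs (θ t) hθt]
    have hsq := Real.sin_sq (4 * θ t)
    set si := Real.sin (4 * θ t)
    set co := Real.cos (4 * θ t)
    set A := si ^ ((β₁ + β₂) / (2 * β₂))
    set B := (1 + co) ^ (-(β₁ / (2 * β₂)))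
    field_simp
    linear_combination (-4 * r t ^ 4 * β₁ * A * B) * hsq
  intro a ha b hb
  have main : ∀ x ∈ Ioo t₀ t₁, ∀ y ∈ Ioo t₀ t₁, x ≤ y →
      (r x) ^ 2 * s (θ x) + (2 * α / β₂) * S (θ x)
        = (r y) ^ 2 * s (θ y) + (2 * α / β₂) * S (θ y) := by
    intro x hx y hy hxy
    have hsub : Icc x y ⊆ Ioo t₀ t₁ :=
      fun z hz => ⟨lt_of_lt_of_le hx.1 hz.1, lt_of_le_of_lt hz.2 hy.2⟩
    have := constant_of_has_deriv_right_zero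
      (f := fun t => (r t) ^ 2 * s (θ t) + (2 * α / β₂) * S (θ t))
      (fun z hz => (hkey z (hsub hz)).continuousAt.continuousWithinAt)
      (fun z hz => (hkey z (hsub (Ico_subset_Icc_self hz))).hasDerivWithinAt)
      y (right_mem_Icc.2 hxy)
    exact this.symm
  rcases le_total a b with h | h
  · exact main a ha b hb h
  · exact (main b hb a ha h).symm
end
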